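/- Let μ : ℂ³ → ℂ³ be the polynomial automorphism μ(a,b,d) = (a, b − 3d² − 3da² − a⁴, d + a²). Then μ is not linearizable: there is no polynomial automorphism ρ of ℂ³ and affine linear automorphism L with μ = ρ ∘ L ∘ ρ⁻¹. -/

import Mathlib

open ContinuousLinearMap

lemma mv_diff (P : MvPolynomial (Fin 3) ℂ) :
    Differentiable ℂ (fun x : Fin 3 → ℂ => MvPolynomial.eval x P) := by
  induction P using MvPolynomial.induction_on with
  | C a => simp only [MvPolynomial.eval_C]; exact differentiable_const a
  | add p q hp hq => simp only [map_add]; exact hp.add hq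
  | mul_X p i hp =>
      simp only [MvPolynomial.eval_mul, MvPolynomial.eval_X]
      exact hp.mul (differentiable_apply i)

theorem stmt18 (μ : (Fin 3 → ℂ) → (Fin 3 → ℂ))
    (hμ : ∀ x, μ x =
      ![x 0, x 1 - 3 * x 2 ^ 2 - 3 * x 2 * x 0 ^ 2 - x 0 ^ 4, x 2 + x 0 ^ 2]) :
    ¬ ∃ (ρ ρi : (Fin 3 → ℂ) → (Fin 3 → ℂ))
        (Pρ Pρi : Fin 3 → MvPolynomial (Fin 3) ℂ)
        (M : Matrix (Fin 3) (Fin 3) ℂ) (b : Fin 3 → ℂ),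
      (∀ x i, ρ x i = MvPolynomial.eval x (Pρ i)) ∧
      (∀ x i, ρi x i = MvPolynomial.eval x (Pρi i)) ∧
      Function.LeftInverse ρi ρ ∧ Function.RightInverse ρi ρ ∧
      IsUnit M ∧
      (∀ x, μ x = ρ (M.mulVec (ρi x) + b)) := by
  rintro ⟨ρ, ρi, Pρ, Pρi, M, b, hρ, hρi, hli, hri, -, hconj⟩
  -- μ fixes 0
  have hμ0 : μ 0 = 0 := by
    rw [hμ]; funext i; fin_cases i <;> simp
  -- differentiability of ρ, ρi
  have hdρ : Differentiable ℂ ρ := by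
    rw [show ρ = fun x i => MvPolynomial.eval x (Pρ i) by funext x i; exact hρ x i]
    exact differentiable_pi.2 fun i => mv_diff (Pρ i)
  have hdρi : Differentiable ℂ ρi := by
    rw [show ρi = fun x i => MvPolynomial.eval x (Pρi i) by funext x i; exact hρi x i]
    exact differentiable_pi.2 fun i => mv_diff (Pρi i)
  set p : Fin 3 → ℂ := ρi 0 with hp
  have hρp : ρ p = 0 := hri 0
  -- inner affine map
  set g : (Fin 3 → ℂ) → (Fin 3 → ℂ) := fun x => M.mulVec (ρi x) + b with hg
  have hg0 : g 0 = p := by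
    have h0 : ρ (g 0) = 0 := by rw [← hconj 0, hμ0]
    have := congrArg ρi h0
    rwa [hli (g 0)] at this
  -- derivative CLMs
  set A : (Fin 3 → ℂ) →L[ℂ] (Fin 3 → ℂ) := fderiv ℂ ρ p with hA
  set B : (Fin 3 → ℂ) →L[ℂ] (Fin 3 → ℂ) := fderiv ℂ ρi 0 with hB
  have hAfd : HasFDerivAt ρ A p := (hdρ p).hasFDerivAt
  have hBfd : HasFDerivAt ρi B 0 := (hdρi 0).hasFDerivAt
  have hAB : A.comp B = ContinuousLinearMap.id ℂ (Fin 3 → ℂ) := by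
    have h1 : HasFDerivAt (ρ ∘ ρi) (A.comp B) 0 :=
      HasFDerivAt.comp 0 hAfd hBfd
    have h2 : HasFDerivAt (ρ ∘ ρi) (ContinuousLinearMap.id ℂ (Fin 3 → ℂ)) 0 := by
      have hid : ρ ∘ ρi = fun x => x := funext hri
      rw [hid]; exact hasFDerivAt_id 0
    exact h1.unique h2
  have hBA : B.comp A = ContinuousLinearMap.id ℂ (Fin 3 → ℂ) := by
    have h1 : HasFDerivAt (ρi ∘ ρ) (B.comp A) p := by
      have hB' : HasFDerivAt ρi B (ρ p) := by rw [hρp]; exact hBfd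
      exact HasFDerivAt.comp p hB' hAfd
    have h2 : HasFDerivAt (ρi ∘ ρ) (ContinuousLinearMap.id ℂ (Fin 3 → ℂ)) p := by
      have hid : ρi ∘ ρ = fun x => x := funext hli
      rw [hid]; exact hasFDerivAt_id p
    exact h1.unique h2
  have hABv : ∀ v, A (B v) = v := fun v => by
    have := DFunLike.congr_fun hAB v; simpa using this
  have hBAv : ∀ v, B (A v) = v := fun v => by
    have := DFunLike.congr_fun hBA v; simpa using this
  -- M.mulVec as a CLM
  set Mc : (Fin 3 → ℂ) →L[ℂ] (Fin 3 → ℂ) := LinearMap.toContinuousLinearMap M.mulVecLin with hMc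
  have hMcApply : ∀ v, Mc v = M.mulVec v := fun v => rfl
  have hgfd : HasFDerivAt g (Mc.comp B) 0 := by
    have h1 : HasFDerivAt (fun x => M.mulVec (ρi x)) (Mc.comp B) 0 := by
      have hMfd : HasFDerivAt (fun v => Mc v) Mc (ρi 0) := Mc.hasFDerivAt
      exact HasFDerivAt.comp 0 hMfd hBfd
    simpa [hg] using h1.add_const b
  -- derivative of μ at 0
  have hμfd : HasFDerivAt μ (A.comp (Mc.comp B)) 0 := by
    have hA' : HasFDerivAt ρ A (g 0) := by rw [hg0]; exact hAfd
    have h1 : HasFDerivAt (ρ ∘ g) (A.comp (Mc.comp B)) 0 :=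
      HasFDerivAt.comp 0 hA' hgfd
    have : μ = ρ ∘ g := funext hconj
    rwa [this]
  -- derivative of μ at 0 is the identity, computed from the formula
  have hproj : ∀ i : Fin 3, HasFDerivAt (fun x : Fin 3 → ℂ => x i)
      (ContinuousLinearMap.proj (R := ℂ) (φ := fun _ : Fin 3 => ℂ) i) (0 : Fin 3 → ℂ) :=
    fun i => (ContinuousLinearMap.proj (R := ℂ) (φ := fun _ : Fin 3 => ℂ) i).hasFDerivAt
  have hμid : HasFDerivAt μ (ContinuousLinearMap.id ℂ (Fin 3 → ℂ)) 0 := by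
    rw [show μ = fun x => ![x 0, x 1 - 3 * x 2 ^ 2 - 3 * x 2 * x 0 ^ 2 - x 0 ^ 4,
        x 2 + x 0 ^ 2] from funext hμ]
    rw [hasFDerivAt_pi']
    intro i
    fin_cases i
    · exact hproj 0
    · have h00 := (hproj 0).mul (hproj 0)
      have ht := (((hproj 1).sub (((hproj 2).mul (hproj 2)).const_mul 3)).sub
          (((hproj 2).const_mul 3).mul h00)).sub (h00.mul h00)
      convert ht using 1
      · funext x
        show x 1 - 3 * x 2 ^ 2 - 3 * x 2 * x 0 ^ 2 - x 0 ^ 4 = _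
        simp only [Pi.sub_apply, Pi.mul_apply, Pi.add_apply, Pi.pow_apply]
        ring
      · ext v
        simp
    · have ht := (hproj 2).add ((hproj 0).mul (hproj 0))
      convert ht using 1
      · funext x
        show x 2 + x 0 ^ 2 = _
        simp only [Pi.sub_apply, Pi.mul_apply, Pi.add_apply, Pi.pow_apply]
        ring
      · ext v
        simp
  -- conclude M.mulVec = id
  have h := hμfd.unique hμid
  have hMcv : ∀ v, Mc v = v := by
    intro v
    have hDv : ∀ w, A (Mc (B w)) = w := fun w => by
      have := DFunLike.congr_fun h w; simpa using this
    have h1 := hDv (A v)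
    rw [hBAv] at h1
    calc Mc v = B (A (Mc v)) := (hBAv _).symm
    _ = B (A v) := by rw [h1]
    _ = v := hBAv v
  -- b = 0
  have hb : b = 0 := by
    have h0 : ρ (ρi 0 + b) = 0 := by
      have := hconj 0
      rw [hμ0] at this
      rw [← hMcApply, hMcv] at this
      exact this.symm
    have := congrArg ρi h0
    rw [hli (ρi 0 + b)] at this
    have h2 : ρi 0 + b = ρi 0 := this
    simpa using congrArg (fun v => v - ρi 0) h2
  -- μ = id, contradiction
  have hid : ∀ x, μ x = x := by
    intro x
    rw [hconj x, ← hMcApply, hMcv, hb, add_zero, hri x]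
  have h1 := congrFun (hid (fun _ => 1)) 1
  rw [hμ (fun _ => 1)] at h1
  simp at h1
  norm_num at h1
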